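/- arXiv:1603.07171 — 2 statements merged into one kernel-verified Lean document; each statement's English description precedes it below -/
import Mathlib

section
/- Let F be a number field, O_F its ring of integers, n ≥ 2 and N a positive multiple of n. Let P(T) = a_0 + a_1 T + ⋯ + a_N T^N ∈ O_F[T] have degree N, and let 𝒫 be a nonzero prime ideal of O_F with v_𝒫(a_0) = v_𝒫(a_N) = 0 such that v_𝒫(P(t)) ≤ 0 for all t ∈ F. Let d ∈ O_F \ {0} with v_𝒫(d) > 0 and n ∤ v_𝒫(d). Then there are no y, t ∈ F with y^n = d · P(t), and there are no nonzero y, t ∈ F with y^n = d · a_N · t^N. -/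
open IsDedekindDomain NumberField Polynomial Multiplicative

/-- Key local computation: if `𝒫` is a prime of `O_F` at which `a₀` and `a_N` are units and
which is not a prime divisor of `P`, and `v_𝒫(d) = k > 0` with `n ∤ k`, then the twisted
superelliptic curve `Yⁿ = d·P(T,Z)` has no affine `F`-point (`yⁿ = d·P(t)`) and no
`F`-point at infinity (`yⁿ = d·a_N·tᴺ` with `y, t ≠ 0`). -/
theorem stmt2 (F : Type*) [Field F] [NumberField F] (n N : ℕ) (hn : 2 ≤ n)
    (hN : 0 < N) (hnN : n ∣ N) (p : Polynomial (𝓞 F)) (hdeg : p.natDegree = N)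
    (v : HeightOneSpectrum (𝓞 F))
    (ha0 : v.valuation F (algebraMap (𝓞 F) F (p.coeff 0)) = 1)
    (haN : v.valuation F (algebraMap (𝓞 F) F (p.coeff N)) = 1)
    (hnodiv : ∀ t : F, 1 ≤ v.valuation F ((p.map (algebraMap (𝓞 F) F)).eval t))
    (d : 𝓞 F) (hd : d ≠ 0) (k : ℕ) (hk : 0 < k) (hkn : ¬ n ∣ k)
    (hvd : v.asIdeal ^ k ∣ Ideal.span {d} ∧ ¬ v.asIdeal ^ (k + 1) ∣ Ideal.span {d}) :
    (¬ ∃ y t : F, y ^ n = (algebraMap (𝓞 F) F d) * (p.map (algebraMap (𝓞 F) F)).eval t) ∧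
    (¬ ∃ y t : F, y ≠ 0 ∧ t ≠ 0 ∧
      y ^ n = (algebraMap (𝓞 F) F d) * (algebraMap (𝓞 F) F (p.coeff N)) * t ^ N) := by
  set q := p.map (algebraMap (𝓞 F) F) with hq
  set vv := (v.valuation F : Valuation F (WithZero (Multiplicative ℤ))) with hvv
  -- valuation of d
  have hvd1 : vv (algebraMap (𝓞 F) F d) = (ofAdd (-(k:ℤ)) : Multiplicative ℤ) := by
    rw [hvv, v.valuation_of_algebraMap, HeightOneSpectrum.intValuation_apply]
    have h1 : v.intValuationDef d ≤ (ofAdd (-(k:ℤ)) : Multiplicative ℤ) :=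
      (v.intValuation_le_pow_iff_dvd d k).mpr hvd.1
    have h2 : ¬ v.intValuationDef d ≤ (ofAdd (-((k:ℤ)+1)) : Multiplicative ℤ) := by
      intro h
      exact hvd.2 ((v.intValuation_le_pow_iff_dvd d (k+1)).mp (by push_cast at h ⊢; exact h))
    have h0 : v.intValuationDef d ≠ 0 := v.intValuation_ne_zero d hd
    obtain ⟨u, hu⟩ := WithZero.ne_zero_iff_exists.mp h0
    rw [← hu] at h1 h2 ⊢
    rw [WithZero.coe_le_coe] at h1 h2
    congr 1
    have h3 := lt_of_not_ge h2
    rw [← Multiplicative.toAdd_le] at h1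
    rw [← Multiplicative.toAdd_lt] at h3
    simp only [toAdd_ofAdd] at h1 h3
    have h4 : toAdd u = -(k:ℤ) := le_antisymm h1 (by omega)
    rw [← h4]; simp
  have hcoef : ∀ i, q.coeff i = algebraMap (𝓞 F) F (p.coeff i) := fun i => coeff_map _ i
  have hcle : ∀ i, vv (q.coeff i) ≤ 1 := fun i => by
    rw [hcoef i]; exact v.valuation_le_one _
  have heval : ∀ t : F, q.eval t = ∑ i ∈ Finset.range (N+1), q.coeff i * t ^ i := by
    intro t
    exact eval_eq_sum_range' (lt_of_le_of_lt (hdeg ▸ natDegree_map_le) (Nat.lt_succ_self N)) t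
  -- key valuation computation
  have hkey : ∀ t : F, ∃ m : ℤ, vv (q.eval t) = (ofAdd m : Multiplicative ℤ) ∧ (n:ℤ) ∣ m := by
    intro t
    rcases le_or_gt (vv t) 1 with hs | hs
    · refine ⟨0, ?_, dvd_zero _⟩
      have hle : vv (q.eval t) ≤ 1 := by
        rw [heval t]
        apply Valuation.map_sum_le
        intro i _
        rw [Valuation.map_mul, Valuation.map_pow]
        calc vv (q.coeff i) * vv t ^ i ≤ 1 * 1 :=
              mul_le_mul' (hcle i) (pow_le_one' hs i)
          _ = 1 := one_mul 1
      have h1 : vv (q.eval t) = 1 := le_antisymm hle (hnodiv t)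
      rw [h1]; rfl
    · have ht0 : vv t ≠ 0 := ne_of_gt (lt_trans zero_lt_one hs)
      obtain ⟨s, hsv⟩ := WithZero.ne_zero_iff_exists.mp ht0
      obtain ⟨c, hc⟩ := hnN
      refine ⟨N * toAdd s, ?_, ⟨c * toAdd s, by rw [hc]; push_cast; ring⟩⟩
      have hNmem : N ∈ Finset.range (N+1) := Finset.self_mem_range_succ N
      have hvalN : vv (q.coeff N * t ^ N) = vv t ^ N := by
        rw [Valuation.map_mul, Valuation.map_pow, hcoef N, haN, one_mul]
      have hmain : vv (q.eval t) = vv t ^ N := by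
        rw [heval t]
        rw [vv.map_sum_eq_of_lt hNmem ?_, hvalN]
        intro i hi
        simp only [Finset.mem_sdiff, Finset.mem_range, Finset.mem_singleton] at hi
        have hiN : i < N := lt_of_le_of_ne (Nat.lt_succ_iff.mp hi.1) hi.2
        rw [hvalN, Valuation.map_mul, Valuation.map_pow]
        calc vv (q.coeff i) * vv t ^ i ≤ 1 * vv t ^ i := mul_le_mul_left (hcle i) _
          _ = vv t ^ i := one_mul _
          _ < vv t ^ N := pow_lt_pow_right₀ hs hiN
      rw [hmain, ← hsv, ← WithZero.coe_pow, WithZero.coe_inj, ← ofAdd_toAdd (s ^ N),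
        toAdd_pow, nsmul_eq_mul]
  -- arithmetic core
  have harith : ∀ (a m : ℤ), (n:ℤ) * a = -(k:ℤ) + m → (n:ℤ) ∣ m → False := by
    rintro a m heq ⟨c, rfl⟩
    apply hkn
    have hzd : (n:ℤ) ∣ (k:ℤ) := ⟨c - a, by linarith⟩
    exact_mod_cast hzd
  constructor
  · rintro ⟨y, t, hyt⟩
    have hy0 : y ≠ 0 := by
      rintro rfl
      have hd0 : (algebraMap (𝓞 F) F) d ≠ 0 :=
        (map_ne_zero_iff _ (FaithfulSMul.algebraMap_injective (𝓞 F) F)).mpr hd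
      have h00 : (algebraMap (𝓞 F) F) d * q.eval t = 0 := by
        rw [← hyt, zero_pow (by omega : n ≠ 0)]
      have : q.eval t = 0 := by
        rcases mul_eq_zero.mp h00 with h | h
        · exact absurd h hd0
        · exact h
      have h1 := hnodiv t
      rw [this] at h1
      simp at h1
    obtain ⟨u, hu⟩ := WithZero.ne_zero_iff_exists.mp ((Valuation.ne_zero_iff vv).mpr hy0)
    obtain ⟨m, hm, hdvd⟩ := hkey t
    have hval : vv (y ^ n) = vv ((algebraMap (𝓞 F) F d) * q.eval t) := by rw [hyt]
    rw [Valuation.map_pow, Valuation.map_mul, hvd1, hm, ← hu, ← WithZero.coe_pow,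
      ← WithZero.coe_mul, WithZero.coe_inj] at hval
    have := congrArg toAdd hval
    rw [toAdd_pow, toAdd_mul, toAdd_ofAdd, toAdd_ofAdd, nsmul_eq_mul] at this
    exact harith _ _ this hdvd
  · rintro ⟨y, t, hy0, ht0, hyt⟩
    obtain ⟨u, hu⟩ := WithZero.ne_zero_iff_exists.mp ((Valuation.ne_zero_iff vv).mpr hy0)
    obtain ⟨s, hsv⟩ := WithZero.ne_zero_iff_exists.mp ((Valuation.ne_zero_iff vv).mpr ht0)
    obtain ⟨c, hc⟩ := hnN
    have hval : vv (y ^ n) = vv ((algebraMap (𝓞 F) F d) * (algebraMap (𝓞 F) F (p.coeff N)) * t ^ N) := by rw [hyt]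
    rw [Valuation.map_pow, Valuation.map_mul, Valuation.map_mul, hvd1, haN, mul_one,
      Valuation.map_pow, ← hu, ← hsv, ← WithZero.coe_pow, ← WithZero.coe_pow,
      ← WithZero.coe_mul, WithZero.coe_inj] at hval
    have := congrArg toAdd hval
    rw [toAdd_pow, toAdd_mul, toAdd_ofAdd, toAdd_pow, nsmul_eq_mul, nsmul_eq_mul] at this
    exact harith _ _ this ⟨c * toAdd s, by rw [hc]; push_cast; ring⟩
end

section
/- Let F be a number field and P(T) ∈ O_F[T] a separable polynomial with nonzero discriminant Δ and leading coefficient a_N. Let 𝒫 be a nonzero prime ideal of O_F with v_𝒫(a_N) = 0 and v_𝒫(Δ) = 0, and suppose 𝒫 is a prime divisor of P(T), i.e., v_𝒫(P(t)) > 0 for some t ∈ O_F. Then there exists t' ∈ O_F with v_𝒫(P(t')) = 1. -/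
open NumberField Polynomial IsDedekindDomain
open scoped Multiplicative WithZero

theorem stmt4_aux (F : Type*) [Field F] [NumberField F] (p : Polynomial (𝓞 F)) (N : ℕ)
    (v : IsDedekindDomain.HeightOneSpectrum (𝓞 F))
    (haN : p.leadingCoeff ∉ v.asIdeal)
    (K : Type*) [Field K] [NumberField K] [Algebra F K]
    (t : Fin N → K)
    (hroots : (p.map (algebraMap (𝓞 F) K)).roots = Multiset.map t Finset.univ.val)
    (hsplits : (p.map (algebraMap (𝓞 F) K)).Splits)
    (Δ : 𝓞 F)
    (hΔ : algebraMap (𝓞 F) K Δ =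
      (algebraMap (𝓞 F) K p.leadingCoeff) ^ (2 * N - 2) *
        ∏ i : Fin N, ∏ j : Fin N, if i < j then (t i - t j) ^ 2 else 1)
    (hΔv : Δ ∉ v.asIdeal)
    (hprimediv : ∃ t₀ : 𝓞 F, p.eval t₀ ∈ v.asIdeal) :
    ∃ t' : 𝓞 F, p.eval t' ∈ v.asIdeal ∧ p.eval t' ∉ v.asIdeal ^ 2 := by
  classical
  -- the prime above v
  have hinj : Function.Injective (algebraMap (𝓞 F) (𝓞 K)) := by
    have h2 : Function.Injective (algebraMap (𝓞 F) K) := by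
      rw [IsScalarTower.algebraMap_eq (𝓞 F) F K]
      exact (algebraMap F K).injective.comp (RingOfIntegers.coe_injective)
    rw [IsScalarTower.algebraMap_eq (𝓞 F) (𝓞 K) K, RingHom.coe_comp] at h2
    exact Function.Injective.of_comp h2
  obtain ⟨Q, hQprime, hQcomap⟩ :=
    Ideal.exists_ideal_over_prime_of_isIntegral_of_isDomain (S := 𝓞 K) v.asIdeal
      (by rw [(RingHom.injective_iff_ker_eq_bot _).mp hinj]; exact bot_le)
  have hQbot : Q ≠ ⊥ := by
    intro h
    apply v.ne_bot
    rw [← hQcomap, h]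
    exact (RingHom.injective_iff_ker_eq_bot _).mp hinj ▸ rfl
  set w : HeightOneSpectrum (𝓞 K) := ⟨Q, hQprime, hQbot⟩ with hwdef
  have hmem : ∀ x : 𝓞 F, x ∈ v.asIdeal ↔ algebraMap (𝓞 F) (𝓞 K) x ∈ w.asIdeal :=
    fun x => by rw [← hQcomap]; exact Iff.rfl
  set W : Valuation K ℤᵐ⁰ := w.valuation K with hWdef
  set A : 𝓞 F →+* K := algebraMap (𝓞 F) K with hAdef
  have key1 : ∀ x : 𝓞 F, W (A x) = w.intValuation (algebraMap (𝓞 F) (𝓞 K) x) := by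
    intro x
    rw [hAdef, IsScalarTower.algebraMap_apply (𝓞 F) (𝓞 K) K]
    exact w.valuation_of_algebraMap _
  have Wle : ∀ x : 𝓞 F, W (A x) ≤ 1 := fun x => by
    rw [key1]; exact w.intValuation_le_one _
  have Wlt : ∀ x : 𝓞 F, W (A x) < 1 ↔ x ∈ v.asIdeal := fun x => by
    rw [key1, w.intValuation_lt_one_iff_dvd,
      Ideal.dvd_span_singleton, ← hmem]
  have Wunit : ∀ x : 𝓞 F, x ∉ v.asIdeal → W (A x) = 1 := fun x hx =>
    le_antisymm (Wle x) (not_lt.mp (fun h => hx ((Wlt x).mp h)))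
  -- the polynomial over K
  set qK : K[X] := p.map A with hqKdef
  set a : K := A p.leadingCoeff with hadef
  have ha1 : W a = 1 := Wunit _ haN
  have ha0 : a ≠ 0 := fun h => by rw [h] at ha1; simp at ha1
  have hlc : qK.leadingCoeff = a := by
    rw [hqKdef, Polynomial.leadingCoeff_map_of_injective (by
      rw [hAdef, IsScalarTower.algebraMap_eq (𝓞 F) F K, RingHom.coe_comp]
      exact (algebraMap F K).injective.comp RingOfIntegers.coe_injective)]
  have hfact : qK = C a * ∏ i : Fin N, (X - C (t i)) := by
    have := hsplits.eq_prod_roots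
    rw [hroots] at this
    rw [hqKdef] at this ⊢
    rw [this, hlc, Multiset.map_map, Finset.prod_eq_multiset_prod]
    congr 1
  -- evaluation transfers
  have evalA : ∀ u : 𝓞 F, qK.eval (A u) = A (p.eval u) := by
    intro u
    rw [hqKdef, Polynomial.eval_map, Polynomial.eval₂_at_apply]
  have derivA : ∀ u : 𝓞 F, (derivative qK).eval (A u) = A (p.derivative.eval u) := by
    intro u
    rw [hqKdef, Polynomial.derivative_map, Polynomial.eval_map, Polynomial.eval₂_at_apply]
  -- roots are "integral": W (t i) ≤ 1
  have hWt : ∀ i, W (t i) ≤ 1 := by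
    intro i
    have hroot : qK.eval (t i) = 0 := by
      apply Polynomial.isRoot_of_mem_roots
      rw [hqKdef, hroots]
      exact Multiset.mem_map.mpr ⟨i, Finset.mem_univ_val _, rfl⟩
    have hint : IsIntegral (𝓞 F) (p.leadingCoeff • t i) := by
      apply isIntegral_leadingCoeff_smul
      rw [aeval_def, ← Polynomial.eval_map]
      exact hroot
    have hint2 : IsIntegral (𝓞 K) (p.leadingCoeff • t i) := hint.tower_top
    obtain ⟨y, hy⟩ := IsIntegrallyClosed.isIntegral_iff.mp hint2
    have hsmul : p.leadingCoeff • t i = a * t i := by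
      rw [hadef, hAdef, Algebra.smul_def]
    have hWa : W (a * t i) ≤ 1 := by
      rw [← hsmul, ← hy, hWdef, w.valuation_of_algebraMap]
      exact w.intValuation_le_one _
    rw [Valuation.map_mul, ha1, one_mul] at hWa
    exact hWa
  have hWsub : ∀ i j, W (t i - t j) ≤ 1 := fun i j =>
    le_trans (W.map_sub _ _) (max_le (hWt i) (hWt j))
  -- distinct roots stay distinct at w
  have hdist : ∀ i j, i ≠ j → W (t i - t j) = 1 := by
    have key : ∀ i j, i < j → W (t i - t j) = 1 := by
      intro i j hij
      have hW1 : (∏ i : Fin N, ∏ j : Fin N,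
          (if i < j then W (t i - t j) ^ 2 else 1)) = 1 := by
        have h := congrArg W hΔ
        rw [Wunit Δ hΔv, Valuation.map_mul, Valuation.map_pow, ha1, one_pow,
          one_mul, map_prod] at h
        rw [Finset.prod_congr rfl (fun i _ => (map_prod W _ _).trans
          (Finset.prod_congr rfl (fun j _ => by
            rw [apply_ite W, Valuation.map_pow, Valuation.map_one])))] at h
        exact h.symm
      have hfac : ∀ (i j : Fin N), (if i < j then W (t i - t j) ^ 2 else 1) ≤ 1 := by
        intro i j
        split
        · exact pow_le_one' (hWsub i j) 2
        · exact le_refl 1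
      have h1 := (Finset.prod_eq_one_iff_of_le_one'
        (fun i _ => Finset.prod_le_one' (fun j _ => hfac i j))).mp hW1 i (Finset.mem_univ i)
      have h2 := (Finset.prod_eq_one_iff_of_le_one' (fun j _ => hfac i j)).mp h1 j
        (Finset.mem_univ j)
      rw [if_pos hij] at h2
      -- from W x ^ 2 = 1 and W x ≤ 1 deduce W x = 1
      refine le_antisymm (hWsub i j) ?_
      calc (1:ℤᵐ⁰) = W (t i - t j) ^ 2 := h2.symm
        _ ≤ W (t i - t j) * 1 := by rw [pow_two]; exact mul_le_mul_right (hWsub i j) _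
        _ = W (t i - t j) := mul_one _
    intro i j hij
    rcases lt_or_gt_of_ne hij with h | h
    · exact key i j h
    · rw [W.map_sub_swap]; exact key j i h
  -- main argument
  obtain ⟨t₀, ht₀⟩ := hprimediv
  have hx₀le : ∀ i, W (A t₀ - t i) ≤ 1 := fun i =>
    le_trans (W.map_sub _ _) (max_le (Wle t₀) (hWt i))
  have hprodlt : ∏ i : Fin N, W (A t₀ - t i) < 1 := by
    have h1 : W (A (p.eval t₀)) < 1 := (Wlt _).mpr ht₀
    rw [← evalA, hfact, eval_mul, eval_C, eval_prod] at h1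
    simp only [eval_sub, eval_X, eval_C] at h1
    rw [Valuation.map_mul, ha1, one_mul, map_prod] at h1
    exact h1
  obtain ⟨i₀, hi₀⟩ : ∃ i₀ : Fin N, W (A t₀ - t i₀) < 1 := by
    by_contra hc
    push_neg at hc
    rw [Finset.prod_eq_one (fun i _ => le_antisymm (hx₀le i) (hc i))] at hprodlt
    exact lt_irrefl _ hprodlt
  have hother : ∀ j, j ≠ i₀ → W (A t₀ - t j) = 1 := by
    intro j hj
    have hrw : A t₀ - t j = (A t₀ - t i₀) + (t i₀ - t j) := by ring
    rw [hrw, Valuation.map_add_eq_of_lt_right _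
      (by rw [hdist i₀ j (Ne.symm hj)]; exact hi₀)]
    exact hdist i₀ j (Ne.symm hj)
  -- the derivative is a v-unit at t₀
  have hderiv : W (A (p.derivative.eval t₀)) = 1 := by
    rw [← derivA]
    have hdq : derivative qK = C a * ∑ i : Fin N, ∏ j ∈ Finset.univ.erase i,
        (X - C (t j)) := by
      rw [hfact, derivative_C_mul]
      congr 1
      rw [Finset.prod_eq_multiset_prod, derivative_prod, Finset.sum_eq_multiset_sum]
      congr 1
      apply Multiset.map_congr rfl
      intro i _
      rw [derivative_X_sub_C, mul_one, Finset.prod_eq_multiset_prod, Finset.erase_val]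
    have heval : (derivative qK).eval (A t₀)
        = a * ∑ i : Fin N, ∏ j ∈ Finset.univ.erase i, (A t₀ - t j) := by
      rw [hdq, eval_mul, eval_C, eval_finset_sum]
      congr 1
      refine Finset.sum_congr rfl fun i _ => ?_
      rw [eval_prod]
      exact Finset.prod_congr rfl fun j _ => by rw [eval_sub, eval_X, eval_C]
    rw [heval, Valuation.map_mul, ha1, one_mul]
    have hterm0 : W (∏ j ∈ Finset.univ.erase i₀, (A t₀ - t j)) = 1 := by
      rw [map_prod]
      exact Finset.prod_eq_one fun j hj => hother j (Finset.ne_of_mem_erase hj)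
    have hrest : W (∑ i ∈ Finset.univ.erase i₀,
        ∏ j ∈ Finset.univ.erase i, (A t₀ - t j)) < 1 := by
      apply Valuation.map_sum_lt _ one_ne_zero
      intro i hi
      have hi' : i ≠ i₀ := Finset.ne_of_mem_erase hi
      have hmem' : i₀ ∈ Finset.univ.erase i :=
        Finset.mem_erase.mpr ⟨Ne.symm hi', Finset.mem_univ _⟩
      rw [map_prod, ← Finset.mul_prod_erase _ _ hmem']
      calc W (A t₀ - t i₀) * ∏ j ∈ (Finset.univ.erase i).erase i₀, W (A t₀ - t j)
          ≤ W (A t₀ - t i₀) * 1 :=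
            mul_le_mul_right (Finset.prod_le_one' fun j _ => hx₀le j) _
        _ = W (A t₀ - t i₀) := mul_one _
        _ < 1 := hi₀
    rw [← Finset.add_sum_erase _ _ (Finset.mem_univ i₀),
      Valuation.map_add_eq_of_lt_left _ (by rw [hterm0]; exact hrest)]
    exact hterm0
  have hd : p.derivative.eval t₀ ∉ v.asIdeal := fun hmem' => by
    have := (Wlt _).mpr hmem'
    rw [hderiv] at this
    exact lt_irrefl _ this
  -- final step
  by_cases h2 : p.eval t₀ ∈ v.asIdeal ^ 2
  swap
  · exact ⟨t₀, ht₀, h2⟩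
  obtain ⟨π, hπ⟩ := v.intValuation_exists_uniformizer
  obtain ⟨k, hk⟩ := p.binomExpansion t₀ π
  have hmemiff : ∀ (x : 𝓞 F) (n : ℕ),
      x ∈ v.asIdeal ^ n ↔ v.intValuation x ≤ Multiplicative.ofAdd (-(n:ℤ)) := by
    intro x n
    change x ∈ _ ↔ v.intValuation x ≤ WithZero.exp (-(n:ℤ))
    rw [v.intValuation_le_pow_iff_dvd x n,
      Ideal.dvd_span_singleton]
  have h21 : ((Multiplicative.ofAdd (-2:ℤ) : Multiplicative ℤ) : ℤᵐ⁰) < ((Multiplicative.ofAdd (-1:ℤ) : Multiplicative ℤ) : ℤᵐ⁰) := by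
    rw [WithZero.coe_lt_coe]
    exact Multiplicative.ofAdd_lt.mpr (by norm_num)
  have hpow : ((Multiplicative.ofAdd (-1:ℤ) : Multiplicative ℤ) : ℤᵐ⁰) ^ 2 = ((Multiplicative.ofAdd (-2:ℤ) : Multiplicative ℤ) : ℤᵐ⁰) := by
    rw [pow_two, ← WithZero.coe_mul, ← ofAdd_add]
    norm_num
  have hπ' : v.intValuation π = ((Multiplicative.ofAdd (-1:ℤ) : Multiplicative ℤ) : ℤᵐ⁰) := by
    rw [HeightOneSpectrum.intValuation_apply]; exact hπ
  have hd1 : v.intValuation (p.derivative.eval t₀) = 1 := by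
    refine le_antisymm (v.intValuation_le_one _) (not_lt.mp fun hlt => hd ?_)
    rw [v.intValuation_lt_one_iff_dvd,
      Ideal.dvd_span_singleton] at hlt
    exact hlt
  have eA : v.intValuation (p.eval t₀) ≤ ((Multiplicative.ofAdd (-2:ℤ) : Multiplicative ℤ) : ℤᵐ⁰) := by
    have := (hmemiff _ 2).mp h2
    norm_num at this ⊢
    exact this
  have eB : v.intValuation (p.derivative.eval t₀ * π) = ((Multiplicative.ofAdd (-1:ℤ) : Multiplicative ℤ) : ℤᵐ⁰) := by
    rw [map_mul, hd1, one_mul, hπ']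
  have eC : v.intValuation (k * π ^ 2) ≤ ((Multiplicative.ofAdd (-2:ℤ) : Multiplicative ℤ) : ℤᵐ⁰) := by
    rw [map_mul, map_pow, hπ', hpow]
    exact mul_le_of_le_one_left' (v.intValuation_le_one k)
  have heval' : v.intValuation (p.eval (t₀ + π)) = ((Multiplicative.ofAdd (-1:ℤ) : Multiplicative ℤ) : ℤᵐ⁰) := by
    rw [hk, show p.eval t₀ + p.derivative.eval t₀ * π + k * π ^ 2
      = p.derivative.eval t₀ * π + (p.eval t₀ + k * π ^ 2) by ring]
    rw [Valuation.map_add_eq_of_lt_left _ (by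
      rw [eB]
      exact lt_of_le_of_lt (le_trans (Valuation.map_add _ _ _) (max_le eA eC)) h21)]
    exact eB
  refine ⟨t₀ + π, ?_, ?_⟩
  · have h1 := hmemiff (p.eval (t₀ + π)) 1
    rw [pow_one] at h1
    rw [h1, heval']
    norm_num
  · intro hc
    have := (hmemiff _ 2).mp hc
    rw [heval'] at this
    norm_num at this
    exact absurd this (not_le.mpr h21)

/-- If `P ∈ O_F[T]` is separable with discriminant `Δ ≠ 0` (expressed via its roots
`t_1, …, t_N` in the splitting field as `Δ = a_N^{2N-2} ∏_{i<j} (t_i - t_j)²`), and `𝒫` is a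
prime at which `a_N` and `Δ` are units and which is a prime divisor of `P`, then `P` takes a
value of exact `𝒫`-adic valuation `1` on `O_F`. -/
theorem stmt4 (F : Type*) [Field F] [NumberField F] (p : Polynomial (𝓞 F)) (N : ℕ)
    (hdeg : p.natDegree = N)
    (hsep : (p.map (algebraMap (𝓞 F) F)).Separable)
    (v : IsDedekindDomain.HeightOneSpectrum (𝓞 F))
    (haN : p.leadingCoeff ∉ v.asIdeal)
    (t : Fin N → (p.map (algebraMap (𝓞 F) F)).SplittingField)
    (hroots : ((p.map (algebraMap (𝓞 F) F)).map
        (algebraMap F (p.map (algebraMap (𝓞 F) F)).SplittingField)).roots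
      = Multiset.map t Finset.univ.val)
    (Δ : 𝓞 F) (hΔ0 : Δ ≠ 0)
    (hΔ : algebraMap (𝓞 F) (p.map (algebraMap (𝓞 F) F)).SplittingField Δ =
      (algebraMap (𝓞 F) (p.map (algebraMap (𝓞 F) F)).SplittingField p.leadingCoeff) ^
          (2 * N - 2) *
        ∏ i : Fin N, ∏ j : Fin N, if i < j then (t i - t j) ^ 2 else 1)
    (hΔv : Δ ∉ v.asIdeal)
    (hprimediv : ∃ t₀ : 𝓞 F, p.eval t₀ ∈ v.asIdeal) :
    ∃ t' : 𝓞 F, p.eval t' ∈ v.asIdeal ∧ p.eval t' ∉ v.asIdeal ^ 2 := by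
  haveI : NumberField (p.map (algebraMap (𝓞 F) F)).SplittingField :=
    NumberField.of_module_finite F _
  have hmaps : p.map (algebraMap (𝓞 F) (p.map (algebraMap (𝓞 F) F)).SplittingField)
      = (p.map (algebraMap (𝓞 F) F)).map
          (algebraMap F (p.map (algebraMap (𝓞 F) F)).SplittingField) := by
    rw [Polynomial.map_map, ← IsScalarTower.algebraMap_eq]
  exact stmt4_aux F p N v haN (p.map (algebraMap (𝓞 F) F)).SplittingField t
    (by rw [hmaps]; exact hroots)
    (by rw [hmaps]; exact SplittingField.splits _)
    Δ hΔ hΔv hprimediv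
end
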